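/- In the all-Gaussian case the kernel sensitivity matrix is diagonal: with f(x) = φ(x;σ), K(x,y) = φ(y − x; h), τ² = σ² + h², P_k(x) = Hn_k(x,σ), Q_j(y) = Hn_j(y,τ), one has s_{jk} = ∫∫ K(x,y) Q_j(y) P_k(x) f(x) dy dx = δ_{jk} (σ/τ)^j = δ_{jk} (1 + h²/σ²)^{-j/2}. -/

import Mathlib

/-- Physicists' Hermite polynomial `H_n(w) = (-1)^n e^{w²} (d/dw)^n e^{-w²}`. -/
noncomputable def physHermite (n : ℕ) (w : ℝ) : ℝ :=
  (-1 : ℝ) ^ n * Real.exp (w ^ 2) * iteratedDeriv n (fun u => Real.exp (-u ^ 2)) w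

/-- Scaled Hermite polynomials `Hn_k(x, σ)`, orthonormal for the `N(0, σ²)` weight. -/
noncomputable def hermiteNorm (k : ℕ) (σ x : ℝ) : ℝ :=
  physHermite k (x / (Real.sqrt 2 * σ)) / ((Real.sqrt 2) ^ k * Real.sqrt (Nat.factorial k))

/-- Density of a centered normal with standard deviation `s`. -/
noncomputable def gaussPdf (s z : ℝ) : ℝ :=
  (1 / (s * Real.sqrt (2 * Real.pi))) * Real.exp (-z ^ 2 / (2 * s ^ 2))

open MeasureTheory Polynomial Filter Real Set

/-! ### auxiliary analytic lemmas -/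

lemma aux_integrable_pow_mul_gauss {b : ℝ} (hb : 0 < b) (n : ℕ) :
    Integrable fun x : ℝ => x ^ n * Real.exp (-b * x ^ 2) := by
  have h := integrable_rpow_mul_exp_neg_mul_sq hb (s := (n : ℝ))
    (by exact_mod_cast neg_one_lt_zero.trans_le (Nat.cast_nonneg n))
  simpa [Real.rpow_natCast] using h

lemma aux_integrable_poly_mul_gauss {b : ℝ} (hb : 0 < b) (p : ℝ[X]) :
    Integrable fun x : ℝ => p.eval x * Real.exp (-b * x ^ 2) := by
  induction p using Polynomial.induction_on' with
  | add p q hp hq => simpa [add_mul] using hp.fun_add hq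
  | monomial n a =>
      simpa [eval_monomial, mul_assoc] using (aux_integrable_pow_mul_gauss hb n).const_mul a

lemma aux_tendsto_pow_mul_gauss_atTop {b : ℝ} (hb : 0 < b) (n : ℕ) :
    Tendsto (fun x : ℝ => x ^ n * Real.exp (-b * x ^ 2)) atTop (nhds 0) := by
  have h := (rpow_mul_exp_neg_mul_sq_isLittleO_exp_neg hb (n : ℝ)).isBigO.trans_tendsto ?_
  · simpa [Real.rpow_natCast] using h
  · have : Tendsto (fun x : ℝ => -(1 / 2) * x) atTop atBot := by
      apply Filter.Tendsto.const_mul_atTop_of_neg (by norm_num) tendsto_id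
    exact Real.tendsto_exp_atBot.comp this

lemma aux_tendsto_poly_mul_gauss_atTop {b : ℝ} (hb : 0 < b) (p : ℝ[X]) :
    Tendsto (fun x : ℝ => p.eval x * Real.exp (-b * x ^ 2)) atTop (nhds 0) := by
  induction p using Polynomial.induction_on' with
  | add p q hp hq =>
      simpa [add_mul] using hp.add hq
  | monomial n a =>
      have := (aux_tendsto_pow_mul_gauss_atTop hb n).const_mul a
      simpa [eval_monomial, mul_assoc] using this

lemma aux_tendsto_poly_mul_gauss_atBot {b : ℝ} (hb : 0 < b) (p : ℝ[X]) :
    Tendsto (fun x : ℝ => p.eval x * Real.exp (-b * x ^ 2)) atBot (nhds 0) := by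
  have h := (aux_tendsto_poly_mul_gauss_atTop hb (p.comp (-X))).comp tendsto_neg_atBot_atTop
  have he : ((fun x : ℝ => (p.comp (-X)).eval x * Real.exp (-b * x ^ 2)) ∘ fun x : ℝ => -x)
      = fun x : ℝ => p.eval x * Real.exp (-b * x ^ 2) := by
    funext x
    simp [Function.comp, eval_comp, neg_sq]
  rwa [he] at h

lemma aux_integral_deriv_eq_zero (f f' : ℝ → ℝ)
    (hderiv : ∀ x, HasDerivAt f (f' x) x) (hint : Integrable f')
    (hbot : Tendsto f atBot (nhds 0)) (htop : Tendsto f atTop (nhds 0)) :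
    ∫ x, f' x = 0 := by
  have h1 : ∫ x in Iic (0 : ℝ), f' x = f 0 - 0 :=
    integral_Iic_of_hasDerivAt_of_tendsto' (fun x _ => hderiv x) hint.integrableOn hbot
  have h2 : ∫ x in Ioi (0 : ℝ), f' x = 0 - f 0 :=
    integral_Ioi_of_hasDerivAt_of_tendsto' (fun x _ => hderiv x) hint.integrableOn htop
  rw [← intervalIntegral.integral_Iic_add_Ioi (b := (0 : ℝ)) hint.integrableOn
    hint.integrableOn, h1, h2]
  ring

/-! ### Gaussian density basics -/

lemma gaussPdf_eq (s z : ℝ) :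
    gaussPdf s z = (1 / (s * Real.sqrt (2 * Real.pi))) *
      Real.exp (-(1 / (2 * s ^ 2)) * z ^ 2) := by
  rw [gaussPdf]
  ring_nf

lemma integrable_gauss_poly' (s x c : ℝ) (hs : 0 < s) (p : ℝ[X]) :
    Integrable fun y : ℝ => gaussPdf s (y - x) * p.eval (y / c) := by
  have hb : 0 < 1 / (2 * s ^ 2) := by positivity
  have key : Integrable fun z : ℝ =>
      gaussPdf s z * ((p.comp (C c⁻¹ * X)).comp (X + C x)).eval z := by
    have := (aux_integrable_poly_mul_gauss hb ((p.comp (C c⁻¹ * X)).comp (X + C x))).const_mul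
      (1 / (s * Real.sqrt (2 * Real.pi)))
    refine this.congr (Eventually.of_forall fun z => ?_)
    simp only [gaussPdf_eq]; ring
  have := key.comp_sub_right x
  refine this.congr (Eventually.of_forall fun y => ?_)
  simp only [eval_comp, eval_add, eval_X, eval_C, eval_mul]
  rw [sub_add_cancel, div_eq_inv_mul]

lemma tendsto_gauss_poly_atTop (s x c : ℝ) (hs : 0 < s) (p : ℝ[X]) :
    Tendsto (fun y : ℝ => gaussPdf s (y - x) * p.eval (y / c)) atTop (nhds 0) := by
  have hb : 0 < 1 / (2 * s ^ 2) := by positivity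
  have key := (aux_tendsto_poly_mul_gauss_atTop hb
    ((p.comp (C c⁻¹ * X)).comp (X + C x))).const_mul (1 / (s * Real.sqrt (2 * Real.pi)))
  rw [mul_zero] at key
  have hcomp : Tendsto (fun y : ℝ => y - x) atTop atTop :=
    tendsto_atTop_add_const_right atTop (-x) tendsto_id
  have := key.comp hcomp
  refine this.congr fun y => ?_
  simp only [Function.comp, eval_comp, eval_add, eval_X, eval_C, eval_mul]
  rw [sub_add_cancel, gaussPdf_eq, div_eq_inv_mul]
  ring

lemma tendsto_gauss_poly_atBot (s x c : ℝ) (hs : 0 < s) (p : ℝ[X]) :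
    Tendsto (fun y : ℝ => gaussPdf s (y - x) * p.eval (y / c)) atBot (nhds 0) := by
  have hb : 0 < 1 / (2 * s ^ 2) := by positivity
  have key := (aux_tendsto_poly_mul_gauss_atBot hb
    ((p.comp (C c⁻¹ * X)).comp (X + C x))).const_mul (1 / (s * Real.sqrt (2 * Real.pi)))
  rw [mul_zero] at key
  have hcomp : Tendsto (fun y : ℝ => y - x) atBot atBot :=
    tendsto_atBot_add_const_right atBot (-x) tendsto_id
  have := key.comp hcomp
  refine this.congr fun y => ?_
  simp only [Function.comp, eval_comp, eval_add, eval_X, eval_C, eval_mul]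
  rw [sub_add_cancel, gaussPdf_eq, div_eq_inv_mul]
  ring

lemma gauss_integral_one (s x : ℝ) (hs : 0 < s) : ∫ y : ℝ, gaussPdf s (y - x) = 1 := by
  have h0 : (fun y : ℝ => gaussPdf s (y - x)) = fun y : ℝ => (fun z => gaussPdf s z) (y - x) :=
    rfl
  rw [h0, integral_sub_right_eq_self (fun z => gaussPdf s z) x]
  have hb : 0 < 1 / (2 * s ^ 2) := by positivity
  have : ∫ z : ℝ, gaussPdf s z
      = (1 / (s * Real.sqrt (2 * Real.pi))) * ∫ z : ℝ, Real.exp (-(1 / (2 * s ^ 2)) * z ^ 2) := by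
    rw [← MeasureTheory.integral_const_mul]
    congr 1
    funext z
    rw [gaussPdf_eq]
  rw [this, integral_gaussian]
  have h2 : Real.sqrt (Real.pi / (1 / (2 * s ^ 2))) = s * Real.sqrt (2 * Real.pi) := by
    rw [show Real.pi / (1 / (2 * s ^ 2)) = s ^ 2 * (2 * Real.pi) by field_simp,
      Real.sqrt_mul (sq_nonneg s), Real.sqrt_sq hs.le]
  rw [h2]
  have h3 : Real.sqrt (2 * Real.pi) ≠ 0 := by positivity
  field_simp

/-! ### Stein's lemma for Gaussian-polynomial integrals -/

lemma gauss_hasDerivAt (s x c : ℝ) (hs : s ≠ 0) (hc : c ≠ 0) (p : ℝ[X]) (y : ℝ) :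
    HasDerivAt (fun y : ℝ => gaussPdf s (y - x) * (s ^ 2 / c * p.eval (y / c)))
      (gaussPdf s (y - x) * (s ^ 2 / c ^ 2 * (derivative p).eval (y / c)
        + x / c * p.eval (y / c) - y / c * p.eval (y / c))) y := by
  have h1 : HasDerivAt (fun y : ℝ => -(y - x) ^ 2 / (2 * s ^ 2)) (-(y - x) / s ^ 2) y := by
    have h0 : HasDerivAt (fun y : ℝ => (y - x) ^ 2) (2 * (y - x)) y := by
      simpa using ((hasDerivAt_id y).sub_const x).fun_pow 2
    have := h0.fun_neg.div_const (2 * s ^ 2)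
    refine this.congr_deriv ?_
    field_simp
  have hg : HasDerivAt (fun y : ℝ => gaussPdf s (y - x))
      (gaussPdf s (y - x) * (-(y - x) / s ^ 2)) y := by
    have := (h1.exp).const_mul (1 / (s * Real.sqrt (2 * Real.pi)))
    simp only [gaussPdf]
    refine this.congr_deriv ?_
    ring
  have hq : HasDerivAt (fun y : ℝ => p.eval (y / c)) ((derivative p).eval (y / c) * c⁻¹) y := by
    have hid : HasDerivAt (fun y : ℝ => y / c) c⁻¹ y := by
      simpa [div_eq_mul_inv] using (hasDerivAt_id y).mul_const c⁻¹
    exact HasDerivAt.comp y (Polynomial.hasDerivAt p (y / c)) hid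
  have hp : HasDerivAt (fun y : ℝ => s ^ 2 / c * p.eval (y / c))
      (s ^ 2 / c * ((derivative p).eval (y / c) * c⁻¹)) y := hq.const_mul _
  have hmul := hg.fun_mul hp
  refine hmul.congr_deriv ?_
  field_simp
  ring

lemma gauss_stein (s x c : ℝ) (hs : 0 < s) (hc : c ≠ 0) (p : ℝ[X]) :
    ∫ y : ℝ, gaussPdf s (y - x) * (y / c * p.eval (y / c))
      = x / c * (∫ y : ℝ, gaussPdf s (y - x) * p.eval (y / c))
        + s ^ 2 / c ^ 2 * ∫ y : ℝ, gaussPdf s (y - x) * (derivative p).eval (y / c) := by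
  have hI1 : Integrable fun y : ℝ => gaussPdf s (y - x) * (y / c * p.eval (y / c)) := by
    have := integrable_gauss_poly' s x c hs (X * p)
    refine this.congr (Filter.Eventually.of_forall fun y => ?_)
    simp [eval_mul]
  have hI2 := integrable_gauss_poly' s x c hs p
  have hI3 := integrable_gauss_poly' s x c hs (derivative p)
  have heq : (fun y : ℝ => gaussPdf s (y - x) * (s ^ 2 / c ^ 2 * (derivative p).eval (y / c)
        + x / c * p.eval (y / c) - y / c * p.eval (y / c)))
      = fun y : ℝ => s ^ 2 / c ^ 2 * (gaussPdf s (y - x) * (derivative p).eval (y / c))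
        + x / c * (gaussPdf s (y - x) * p.eval (y / c))
        - gaussPdf s (y - x) * (y / c * p.eval (y / c)) := by
    funext y; ring
  have hzero : ∫ y : ℝ, gaussPdf s (y - x) * (s ^ 2 / c ^ 2 * (derivative p).eval (y / c)
      + x / c * p.eval (y / c) - y / c * p.eval (y / c)) = 0 := by
    apply aux_integral_deriv_eq_zero
      (fun y : ℝ => gaussPdf s (y - x) * (s ^ 2 / c * p.eval (y / c)))
    · exact fun y => gauss_hasDerivAt s x c hs.ne' hc p y
    · rw [heq]
      exact ((hI3.const_mul _).add (hI2.const_mul _)).sub hI1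
    · have hb := (tendsto_gauss_poly_atBot s x c hs p).const_mul (s ^ 2 / c)
      rw [mul_zero] at hb
      refine hb.congr fun y => ?_
      ring
    · have ht := (tendsto_gauss_poly_atTop s x c hs p).const_mul (s ^ 2 / c)
      rw [mul_zero] at ht
      refine ht.congr fun y => ?_
      ring
  rw [heq] at hzero
  have hfg : Integrable (fun y : ℝ =>
      s ^ 2 / c ^ 2 * (gaussPdf s (y - x) * (derivative p).eval (y / c))
      + x / c * (gaussPdf s (y - x) * p.eval (y / c))) := by
    exact (hI3.const_mul _).add (hI2.const_mul _)
  rw [MeasureTheory.integral_sub hfg hI1,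
    MeasureTheory.integral_add (hI3.const_mul _) (hI2.const_mul _),
    MeasureTheory.integral_const_mul, MeasureTheory.integral_const_mul] at hzero
  linarith

/-! ### real Hermite polynomials -/

/-- Real-coefficient probabilists' Hermite polynomial. -/
noncomputable def Hr (n : ℕ) : ℝ[X] := (Polynomial.hermite n).map (Int.castRingHom ℝ)

lemma Hr_zero : Hr 0 = 1 := by simp [Hr, hermite_zero]

lemma Hr_one : Hr 1 = X := by simp [Hr, hermite_one]

lemma Hr_succ (n : ℕ) : Hr (n + 1) = X * Hr n - derivative (Hr n) := by
  simp [Hr, hermite_succ, Polynomial.map_mul, Polynomial.map_sub, derivative_map]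

lemma Hr_derivative : ∀ n : ℕ, derivative (Hr (n + 1)) = C ((n : ℝ) + 1) * Hr n := by
  intro n
  induction n with
  | zero => simp [Hr_one, Hr_zero]
  | succ n ih =>
      have hcast : ((n : ℝ) + 1) + 1 = ((n + 1 : ℕ) : ℝ) + 1 := by push_cast; ring
      calc derivative (Hr (n + 1 + 1))
          = Hr (n + 1) + X * (C ((n : ℝ) + 1) * Hr n)
            - C ((n : ℝ) + 1) * derivative (Hr n) := by
            rw [Hr_succ (n + 1), derivative_sub, derivative_mul, derivative_X, ih,
              derivative_mul, derivative_C, one_mul, zero_mul, zero_add]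
        _ = Hr (n + 1) + C ((n : ℝ) + 1) * (X * Hr n - derivative (Hr n)) := by ring
        _ = Hr (n + 1) + C ((n : ℝ) + 1) * Hr (n + 1) := by rw [← Hr_succ]
        _ = C (((n : ℝ) + 1) + 1) * Hr (n + 1) := by
            have hC : C (((n : ℝ) + 1) + 1) = C ((n : ℝ) + 1) + 1 := by rw [C_add, C_1]
            rw [hC]; ring
        _ = C (((n + 1 : ℕ) : ℝ) + 1) * Hr (n + 1) := by rw [hcast]

/-! ### moments and orthogonality -/

lemma gauss_mean (σ : ℝ) (hσ : 0 < σ) (k : ℕ) :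
    ∫ x : ℝ, gaussPdf σ (x - 0) * (Hr k).eval (x / σ)
      = if k = 0 then 1 else 0 := by
  cases k with
  | zero =>
      simp only [Hr_zero, eval_one, mul_one, if_pos rfl]
      exact gauss_integral_one σ 0 hσ
  | succ n =>
      have hI1 : Integrable fun x : ℝ => gaussPdf σ (x - 0) * (x / σ * (Hr n).eval (x / σ)) := by
        have := integrable_gauss_poly' σ 0 σ hσ (X * Hr n)
        refine this.congr (Filter.Eventually.of_forall fun y => ?_)
        simp [eval_mul]
      have hI3 := integrable_gauss_poly' σ 0 σ hσ (derivative (Hr n))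
      have hsplit : (fun x : ℝ => gaussPdf σ (x - 0) * (Hr (n + 1)).eval (x / σ))
          = fun x : ℝ => gaussPdf σ (x - 0) * (x / σ * (Hr n).eval (x / σ))
            - gaussPdf σ (x - 0) * (derivative (Hr n)).eval (x / σ) := by
        funext x
        rw [Hr_succ]
        simp [eval_sub, eval_mul]
        ring
      rw [hsplit, MeasureTheory.integral_sub hI1 hI3, gauss_stein σ 0 σ hσ hσ.ne' (Hr n)]
      have : σ ^ 2 / σ ^ 2 = 1 := div_self (pow_ne_zero _ hσ.ne')
      rw [this]
      simp

lemma gauss_orth (σ : ℝ) (hσ : 0 < σ) : ∀ j k : ℕ,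
    ∫ x : ℝ, gaussPdf σ (x - 0) * (Hr j * Hr k).eval (x / σ)
      = if j = k then (Nat.factorial j : ℝ) else 0 := by
  intro j
  induction j with
  | zero =>
      intro k
      have : ∀ x : ℝ, (Hr 0 * Hr k).eval (x / σ) = (Hr k).eval (x / σ) := by
        intro x; rw [Hr_zero]; simp
      simp only [this]
      rw [gauss_mean σ hσ k]
      rcases Nat.eq_zero_or_pos k with hk | hk
      · simp [hk]
      · rw [if_neg (Nat.pos_iff_ne_zero.mp hk), if_neg (fun hc => (Nat.pos_iff_ne_zero.mp hk) hc.symm)]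
  | succ j ih =>
      intro k
      have hI1 : Integrable fun x : ℝ =>
          gaussPdf σ (x - 0) * (x / σ * (Hr j * Hr k).eval (x / σ)) := by
        have := integrable_gauss_poly' σ 0 σ hσ (X * (Hr j * Hr k))
        refine this.congr (Filter.Eventually.of_forall fun y => ?_)
        simp [eval_mul]
      have hI2 := integrable_gauss_poly' σ 0 σ hσ (derivative (Hr j) * Hr k)
      have hI3 := integrable_gauss_poly' σ 0 σ hσ (Hr j * derivative (Hr k))
      have hsplit : (fun x : ℝ => gaussPdf σ (x - 0) * (Hr (j + 1) * Hr k).eval (x / σ))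
          = fun x : ℝ => gaussPdf σ (x - 0) * (x / σ * (Hr j * Hr k).eval (x / σ))
            - gaussPdf σ (x - 0) * (derivative (Hr j) * Hr k).eval (x / σ) := by
        funext x
        rw [Hr_succ]
        simp [eval_sub, eval_mul]
        ring
      have hstein := gauss_stein σ 0 σ hσ hσ.ne' (Hr j * Hr k)
      rw [derivative_mul] at hstein
      have hsum : ∫ x : ℝ, gaussPdf σ (x - 0) *
            (derivative (Hr j) * Hr k + Hr j * derivative (Hr k)).eval (x / σ)
          = (∫ x : ℝ, gaussPdf σ (x - 0) * (derivative (Hr j) * Hr k).eval (x / σ))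
            + ∫ x : ℝ, gaussPdf σ (x - 0) * (Hr j * derivative (Hr k)).eval (x / σ) := by
        rw [← MeasureTheory.integral_add hI2 hI3]
        congr 1
        funext x
        simp [eval_add]
        ring
      rw [hsum] at hstein
      have hσσ : σ ^ 2 / σ ^ 2 = 1 := div_self (pow_ne_zero _ hσ.ne')
      rw [hσσ] at hstein
      simp only [zero_div, zero_mul, zero_add, one_mul] at hstein
      rw [hsplit, MeasureTheory.integral_sub hI1 hI2, hstein]
      have hkey : ∫ x : ℝ, gaussPdf σ (x - 0) * (Hr j * derivative (Hr k)).eval (x / σ)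
          = if j + 1 = k then (Nat.factorial (j + 1) : ℝ) else 0 := by
        cases k with
        | zero =>
            simp [Hr_zero]
        | succ m =>
            have : ∀ x : ℝ, (Hr j * derivative (Hr (m + 1))).eval (x / σ)
                = ((m : ℝ) + 1) * (Hr j * Hr m).eval (x / σ) := by
              intro x
              rw [Hr_derivative m]
              simp [eval_mul]
              ring
            simp only [this]
            rw [show (fun x : ℝ => gaussPdf σ (x - 0) * (((m : ℝ) + 1) * (Hr j * Hr m).eval (x / σ)))
                = fun x : ℝ => ((m : ℝ) + 1) * (gaussPdf σ (x - 0) * (Hr j * Hr m).eval (x / σ))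
              from funext fun x => by ring]
            rw [MeasureTheory.integral_const_mul, ih m]
            by_cases hjm : j = m
            · subst hjm
              rw [if_pos rfl, if_pos rfl, Nat.factorial_succ]
              push_cast
              ring
            · rw [if_neg hjm, if_neg (fun hc => hjm (Nat.succ_injective hc)), mul_zero]
      rw [hkey]
      ring

/-! ### Gaussian convolution of Hermite polynomials -/

lemma gauss_conv (σ h τ x : ℝ) (hσ : 0 < σ) (hh : 0 < h) (hτ : 0 < τ)
    (hτ2 : τ ^ 2 = σ ^ 2 + h ^ 2) : ∀ j : ℕ,
    ∫ y : ℝ, gaussPdf h (y - x) * (Hr j).eval (y / τ)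
      = (σ / τ) ^ j * (Hr j).eval (x / σ) := by
  intro j
  induction j using Nat.twoStepInduction with
  | zero =>
      simp only [Hr_zero, eval_one, mul_one, pow_zero]
      exact gauss_integral_one h x hh
  | one =>
      have hstein := gauss_stein h x τ hh hτ.ne' 1
      simp only [eval_one, mul_one, derivative_one, eval_zero, mul_zero,
        MeasureTheory.integral_zero, add_zero] at hstein
      rw [show (fun y : ℝ => gaussPdf h (y - x) * (Hr 1).eval (y / τ))
          = fun y : ℝ => gaussPdf h (y - x) * (y / τ * 1) from funext fun y => by
            rw [Hr_one]; simp]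
      rw [show (fun y : ℝ => gaussPdf h (y - x) * (y / τ))
          = fun y : ℝ => gaussPdf h (y - x) * (y / τ * 1) from funext fun y => by ring] at hstein
      rw [hstein, gauss_integral_one h x hh, Hr_one, eval_X, pow_one]
      field_simp
  | more j ih0 ih1 =>
      have hI1 : Integrable fun y : ℝ =>
          gaussPdf h (y - x) * (y / τ * (Hr (j + 1)).eval (y / τ)) := by
        have := integrable_gauss_poly' h x τ hh (X * Hr (j + 1))
        refine this.congr (Filter.Eventually.of_forall fun y => ?_)
        simp [eval_mul]
      have hI2 := integrable_gauss_poly' h x τ hh (derivative (Hr (j + 1)))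
      have hsplit : (fun y : ℝ => gaussPdf h (y - x) * (Hr (j + 2)).eval (y / τ))
          = fun y : ℝ => gaussPdf h (y - x) * (y / τ * (Hr (j + 1)).eval (y / τ))
            - gaussPdf h (y - x) * (derivative (Hr (j + 1))).eval (y / τ) := by
        funext y
        rw [show j + 2 = (j + 1) + 1 from rfl, Hr_succ]
        simp [eval_sub, eval_mul]
        ring
      have hstein := gauss_stein h x τ hh hτ.ne' (Hr (j + 1))
      have hd : ∀ z : ℝ, (derivative (Hr (j + 1))).eval z = ((j : ℝ) + 1) * (Hr j).eval z := by
        intro z; rw [Hr_derivative j]; simp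
      have hDint : ∫ y : ℝ, gaussPdf h (y - x) * (derivative (Hr (j + 1))).eval (y / τ)
          = ((j : ℝ) + 1) * ((σ / τ) ^ j * (Hr j).eval (x / σ)) := by
        rw [show (fun y : ℝ => gaussPdf h (y - x) * (derivative (Hr (j + 1))).eval (y / τ))
            = fun y : ℝ => ((j : ℝ) + 1) * (gaussPdf h (y - x) * (Hr j).eval (y / τ))
          from funext fun y => by rw [hd]; ring]
        rw [MeasureTheory.integral_const_mul, ih0]
      rw [hsplit, MeasureTheory.integral_sub hI1 hI2, hstein, hDint, ih1]
      rw [show j + 2 = (j + 1) + 1 from rfl, Hr_succ (j + 1), eval_sub, eval_mul, eval_X,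
        hd (x / σ)]
      have hh2 : h ^ 2 = τ ^ 2 - σ ^ 2 := by linarith
      rw [hh2, pow_succ (σ / τ) (j + 1), pow_succ (σ / τ) j]
      field_simp
      ring

/-! ### relating `physHermite` to `Hr` -/

lemma physHermite_eq (n : ℕ) (w : ℝ) :
    physHermite n w = (Real.sqrt 2) ^ n * (Hr n).eval (Real.sqrt 2 * w) := by
  have hcd : ContDiff ℝ n fun y : ℝ => Real.exp (-(y ^ 2 / 2)) := by
    have : ContDiff ℝ ⊤ fun y : ℝ => Real.exp (-(y ^ 2 / 2)) :=
      (((contDiff_id.pow 2).div_const 2).neg).exp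
    exact this.of_le le_top
  have hscale : (fun u : ℝ => Real.exp (-u ^ 2))
      = fun u : ℝ => (fun y : ℝ => Real.exp (-(y ^ 2 / 2))) (Real.sqrt 2 * u) := by
    funext u
    simp only
    congr 1
    rw [mul_pow, Real.sq_sqrt (by norm_num : (0:ℝ) ≤ 2)]
    ring
  have hstep : iteratedDeriv n (fun u : ℝ => Real.exp (-u ^ 2)) w
      = (Real.sqrt 2) ^ n * ((-1 : ℝ) ^ n * (Polynomial.aeval (Real.sqrt 2 * w)
          (Polynomial.hermite n)) * Real.exp (-((Real.sqrt 2 * w) ^ 2 / 2))) := by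
    rw [hscale, iteratedDeriv_comp_const_mul hcd, iteratedDeriv_eq_iterate]
    beta_reduce
    rw [Polynomial.deriv_gaussian_eq_hermite_mul_gaussian]
  have h1 : (Real.sqrt 2 * w) ^ 2 / 2 = w ^ 2 := by
    rw [mul_pow, Real.sq_sqrt (by norm_num : (0:ℝ) ≤ 2)]
    ring
  have h2 : (Polynomial.aeval (Real.sqrt 2 * w) (Polynomial.hermite n) : ℝ)
      = (Hr n).eval (Real.sqrt 2 * w) := by
    rw [Hr, eval_map, Polynomial.aeval_def, algebraMap_int_eq]
  rw [physHermite, hstep, h1, h2]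
  have hsgn : ((-1 : ℝ)) ^ n * (-1 : ℝ) ^ n = 1 := by
    rw [← mul_pow]; norm_num
  have hexp : Real.exp (w ^ 2) * Real.exp (-w ^ 2) = 1 := by
    rw [← Real.exp_add]; simp
  calc (-1 : ℝ) ^ n * Real.exp (w ^ 2) * ((Real.sqrt 2) ^ n
        * ((-1 : ℝ) ^ n * (Hr n).eval (Real.sqrt 2 * w) * Real.exp (-w ^ 2)))
      = ((-1 : ℝ) ^ n * (-1 : ℝ) ^ n) * (Real.exp (w ^ 2) * Real.exp (-w ^ 2))
        * ((Real.sqrt 2) ^ n * (Hr n).eval (Real.sqrt 2 * w)) := by ring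
    _ = (Real.sqrt 2) ^ n * (Hr n).eval (Real.sqrt 2 * w) := by
        rw [hsgn, hexp]; ring

lemma hermiteNorm_eq (k : ℕ) (s x : ℝ) (hs : s ≠ 0) :
    hermiteNorm k s x = (Hr k).eval (x / s) / Real.sqrt (Nat.factorial k) := by
  rw [hermiteNorm, physHermite_eq]
  have h2 : Real.sqrt 2 ≠ 0 := by positivity
  have harg : Real.sqrt 2 * (x / (Real.sqrt 2 * s)) = x / s := by field_simp
  rw [harg, mul_div_mul_left _ _ (pow_ne_zero k h2)]

theorem gaussian_sensitivity_diagonal (σ h τ : ℝ) (hσ : 0 < σ) (hh : 0 < h)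
    (hτ : τ = Real.sqrt (σ ^ 2 + h ^ 2)) (j k : ℕ) :
    (∫ x : ℝ, (∫ y : ℝ, gaussPdf h (y - x) * hermiteNorm j τ y)
        * hermiteNorm k σ x * gaussPdf σ x)
      = (if j = k then (σ / τ) ^ j else 0) ∧
    (σ / τ) ^ j = (1 + h ^ 2 / σ ^ 2) ^ (-(j : ℝ) / 2) := by
  have hτpos : 0 < τ := by rw [hτ]; positivity
  have hτ2 : τ ^ 2 = σ ^ 2 + h ^ 2 := by rw [hτ]; exact Real.sq_sqrt (by positivity)
  constructor
  · have hinner : ∀ x : ℝ, (∫ y : ℝ, gaussPdf h (y - x) * hermiteNorm j τ y)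
        = (σ / τ) ^ j * (Hr j).eval (x / σ) / Real.sqrt (Nat.factorial j) := by
      intro x
      have heq : (fun y : ℝ => gaussPdf h (y - x) * hermiteNorm j τ y)
          = fun y : ℝ => (gaussPdf h (y - x) * (Hr j).eval (y / τ))
            / Real.sqrt (Nat.factorial j) := by
        funext y
        rw [hermiteNorm_eq j τ y hτpos.ne']
        ring
      rw [heq, MeasureTheory.integral_div, gauss_conv σ h τ x hσ hh hτpos hτ2 j]
    have houter : (fun x : ℝ => (∫ y : ℝ, gaussPdf h (y - x) * hermiteNorm j τ y)
          * hermiteNorm k σ x * gaussPdf σ x)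
        = fun x : ℝ => ((σ / τ) ^ j
            / (Real.sqrt (Nat.factorial j) * Real.sqrt (Nat.factorial k)))
          * (gaussPdf σ (x - 0) * (Hr j * Hr k).eval (x / σ)) := by
      funext x
      rw [hinner x, hermiteNorm_eq k σ x hσ.ne', sub_zero, eval_mul]
      ring
    rw [houter, MeasureTheory.integral_const_mul, gauss_orth σ hσ j k]
    by_cases hjk : j = k
    · subst hjk
      rw [if_pos rfl, if_pos rfl]
      have hf : Real.sqrt (Nat.factorial j) * Real.sqrt (Nat.factorial j)
          = (Nat.factorial j : ℝ) := Real.mul_self_sqrt (Nat.cast_nonneg _)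
      have hfne : (Nat.factorial j : ℝ) ≠ 0 :=
        Nat.cast_ne_zero.mpr (Nat.factorial_ne_zero j)
      rw [hf, div_mul_cancel₀ _ hfne]
    · rw [if_neg hjk, if_neg hjk, mul_zero]
  · have hx : (0 : ℝ) ≤ σ / τ := by positivity
    have hb' : (1 : ℝ) + h ^ 2 / σ ^ 2 = ((σ / τ) ^ 2)⁻¹ := by
      rw [div_pow]
      rw [show ((σ ^ 2 / τ ^ 2)⁻¹ : ℝ) = τ ^ 2 / σ ^ 2 by
        rw [inv_div]]
      rw [hτ2]
      field_simp
    rw [hb', Real.inv_rpow (by positivity), ← Real.rpow_neg (by positivity),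
      ← Real.rpow_natCast (σ / τ) 2, ← Real.rpow_mul hx]
    rw [show (2 : ℕ) * -(-(j : ℝ) / 2) = (j : ℝ) by push_cast; ring]
    rw [Real.rpow_natCast]
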